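/- Let T be a tree on p ≥ 2 vertices, and let G be the join of T with a complete graph on m vertices (m universal vertices added to T). Then the number of moral acyclic orientations of G equals ((p−1)·m² + (2p−1)·m + p)·m!. -/

import Mathlib

/-- A chord of a closed walk: an edge of `G` between two vertices of the walk
that is not an edge of the walk. -/
def SimpleGraph.Walk.HasChord {V : Type*} {G : SimpleGraph V} {v : V}
    (c : G.Walk v v) : Prop :=
  ∃ a b, a ∈ c.support ∧ b ∈ c.support ∧ G.Adj a b ∧ s(a, b) ∉ c.edges

/-- A graph is chordal if every cycle with four or more vertices has a chord. -/
def SimpleGraph.IsChordalGraph {V : Type*} (G : SimpleGraph V) : Prop :=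
  ∀ (v : V) (c : G.Walk v v), c.IsCycle → 4 ≤ c.length → c.HasChord

/-- A vertex is dominating if it is adjacent to every other vertex. -/
def SimpleGraph.IsDominatingVertex {V : Type*} (G : SimpleGraph V) (v : V) : Prop :=
  ∀ w, w ≠ v → G.Adj v w

/-- `D` is an orientation of `G`: each edge gets exactly one direction. -/
def SimpleGraph.IsOrientation {V : Type*} (G : SimpleGraph V) (D : V → V → Prop) : Prop :=
  (∀ a b, G.Adj a b ↔ (D a b ∨ D b a)) ∧ ∀ a b, ¬(D a b ∧ D b a)

/-- An orientation (directed relation) is acyclic if it has no directed cycle. -/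
def IsAcyclicRel {V : Type*} (D : V → V → Prop) : Prop :=
  ∀ a, ¬ Relation.TransGen D a a

/-- An orientation is moral (w.r.t. `G`) if it contains no v-structure. -/
def SimpleGraph.IsMoralOrient {V : Type*} (G : SimpleGraph V) (D : V → V → Prop) : Prop :=
  ∀ a b c, D a c → D b c → a ≠ b → G.Adj a b

/-- The number of moral acyclic orientations of `G`. -/
noncomputable def moralAcyclicCount {V : Type*} (G : SimpleGraph V) : ℕ :=
  Set.ncard {D : V → V → Prop |
    G.IsOrientation D ∧ IsAcyclicRel D ∧ G.IsMoralOrient D}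

/-- Join of two graphs: all edges of each plus all edges across. -/
def joinGraph {V1 V2 : Type*} (G1 : SimpleGraph V1) (G2 : SimpleGraph V2) :
    SimpleGraph (V1 ⊕ V2) where
  Adj x y := match x, y with
    | .inl a, .inl b => G1.Adj a b
    | .inr a, .inr b => G2.Adj a b
    | .inl _, .inr _ => True
    | .inr _, .inl _ => True
  symm := ⟨by rintro (a | a) (b | b) h <;> simp_all [SimpleGraph.adj_comm]⟩
  loopless := ⟨by rintro (a | a) h <;> simp_all⟩

/-- Disjoint union of two graphs. -/
def sumGraph {V1 V2 : Type*} (G1 : SimpleGraph V1) (G2 : SimpleGraph V2) :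
    SimpleGraph (V1 ⊕ V2) where
  Adj x y := match x, y with
    | .inl a, .inl b => G1.Adj a b
    | .inr a, .inr b => G2.Adj a b
    | _, _ => False
  symm := ⟨by rintro (a | a) (b | b) h <;> simp_all [SimpleGraph.adj_comm]⟩
  loopless := ⟨by rintro (a | a) h <;> simp_all⟩

open SimpleGraph
set_option linter.unusedSectionVars false
set_option maxHeartbeats 1000000

section JoinAdj
variable {V1 V2 : Type*} {G1 : SimpleGraph V1} {G2 : SimpleGraph V2}
@[simp] lemma join_adj_ll {a b : V1} : (joinGraph G1 G2).Adj (.inl a) (.inl b) ↔ G1.Adj a b := Iff.rfl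
@[simp] lemma join_adj_rr {a b : V2} : (joinGraph G1 G2).Adj (.inr a) (.inr b) ↔ G2.Adj a b := Iff.rfl
@[simp] lemma join_adj_lr {a : V1} {b : V2} : (joinGraph G1 G2).Adj (.inl a) (.inr b) := trivial
@[simp] lemma join_adj_rl {a : V2} {b : V1} : (joinGraph G1 G2).Adj (.inr a) (.inl b) := trivial
end JoinAdj
namespace TreeAux

variable {V : Type*} [DecidableEq V] {T : SimpleGraph V}

noncomputable def tpath (hT : T.IsTree) (r u : V) : T.Walk r u :=
  (hT.existsUnique_path r u).exists.choose

lemma tpath_isPath (hT : T.IsTree) (r u : V) : (tpath hT r u).IsPath :=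
  (hT.existsUnique_path r u).exists.choose_spec

lemma tpath_eq (hT : T.IsTree) {r u : V} (p : T.Walk r u) (hp : p.IsPath) :
    p = tpath hT r u :=
  (hT.existsUnique_path r u).unique hp (tpath_isPath hT r u)

lemma tpath_nil (hT : T.IsTree) (r : V) : tpath hT r r = SimpleGraph.Walk.nil :=
  (tpath_eq hT _ (SimpleGraph.Walk.IsPath.nil)).symm

lemma tpath_adj (hT : T.IsTree) {a b : V} (h : T.Adj a b) :
    tpath hT a b = SimpleGraph.Walk.cons h SimpleGraph.Walk.nil :=
  (tpath_eq hT _ (by simp [SimpleGraph.Walk.isPath_def, h.ne])).symm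

lemma tree_no_triangle (hT : T.IsTree) {a b c : V}
    (hab : T.Adj a b) (hbc : T.Adj b c) (hac : T.Adj a c) : False := by
  have h1 : (SimpleGraph.Walk.cons hac SimpleGraph.Walk.nil : T.Walk a c)
      = tpath hT a c := tpath_eq hT _ (by simp [SimpleGraph.Walk.isPath_def, hac.ne])
  have h2 : (SimpleGraph.Walk.cons hab (SimpleGraph.Walk.cons hbc SimpleGraph.Walk.nil) :
      T.Walk a c) = tpath hT a c := by
    refine tpath_eq hT _ ?_
    simp [SimpleGraph.Walk.isPath_def, hab.ne, hbc.ne, hac.ne]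
  have := h1.trans h2.symm
  have := congrArg SimpleGraph.Walk.length this
  simp at this

lemma tpath_concat (hT : T.IsTree) {r v u : V} (h : T.Adj v u)
    (hv : v ∈ (tpath hT r u).support) :
    tpath hT r u = (tpath hT r v).concat h := by
  have hP := tpath_isPath hT r u
  have htake : (tpath hT r u).takeUntil v hv = tpath hT r v :=
    tpath_eq hT _ (hP.takeUntil hv)
  have hdrop : (tpath hT r u).dropUntil v hv = SimpleGraph.Walk.cons h SimpleGraph.Walk.nil := by
    rw [← tpath_adj hT h]
    exact tpath_eq hT _ (hP.dropUntil hv)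
  conv_lhs => rw [← (tpath hT r u).take_spec hv]
  rw [htake, hdrop, SimpleGraph.Walk.concat_eq_append]

/-- The orientation of the tree away from the root `r`. -/
def Dt (hT : T.IsTree) (r v w : V) : Prop :=
  T.Adj v w ∧ v ∈ (tpath hT r w).support

lemma Dt.adj {hT : T.IsTree} {r v w : V} (h : Dt hT r v w) : T.Adj v w := h.1

lemma Dt.concat_eq {hT : T.IsTree} {r v w : V} (h : Dt hT r v w) :
    tpath hT r w = (tpath hT r v).concat h.1 :=
  tpath_concat hT h.1 h.2

lemma Dt.length {hT : T.IsTree} {r v w : V} (h : Dt hT r v w) :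
    (tpath hT r v).length + 1 = (tpath hT r w).length := by
  rw [h.concat_eq]; simp [SimpleGraph.Walk.length_concat]

lemma not_Dt_root (hT : T.IsTree) (r v : V) : ¬ Dt hT r v r := by
  rintro ⟨hadj, hmem⟩
  rw [tpath_nil] at hmem
  simp only [SimpleGraph.Walk.support_nil, List.mem_singleton] at hmem
  subst hmem
  exact hadj.ne rfl

lemma Dt_total (hT : T.IsTree) (r : V) {v w : V} (h : T.Adj v w) :
    Dt hT r v w ∨ Dt hT r w v := by
  by_contra hcon
  push_neg at hcon
  obtain ⟨h1, h2⟩ := hcon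
  have hv : v ∉ (tpath hT r w).support := fun hm => h1 ⟨h, hm⟩
  have hw : w ∉ (tpath hT r v).support := fun hm => h2 ⟨h.symm, hm⟩
  have hpath : ((tpath hT r v).concat h).IsPath := by
    refine SimpleGraph.Walk.IsPath.mk' ?_
    rw [SimpleGraph.Walk.support_concat,
      List.nodup_append]
    refine ⟨(tpath_isPath hT r v).support_nodup, List.nodup_singleton w, ?_⟩
    intro x hx y hx' hxy
    simp only [List.mem_singleton] at hx'
    subst hx'
    subst hxy
    exact hw hx
  have := tpath_eq hT _ hpath
  apply hv
  rw [← this, SimpleGraph.Walk.support_concat]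
  simp [SimpleGraph.Walk.start_mem_support]

lemma Dt.asymm {hT : T.IsTree} {r v w : V} (h : Dt hT r v w) (h' : Dt hT r w v) : False := by
  have := h.length
  have := h'.length
  omega

lemma Dt.parent_unique {hT : T.IsTree} {r v w u : V} (h : Dt hT r v u) (h' : Dt hT r w u) :
    v = w := by
  obtain ⟨hv, -⟩ := SimpleGraph.Walk.concat_inj (h.concat_eq.symm.trans h'.concat_eq)
  exact hv

lemma exists_parent (hT : T.IsTree) {r u : V} (hu : u ≠ r) : ∃ v, Dt hT r v u := by
  obtain ⟨w, h, q, hq⟩ := SimpleGraph.Walk.exists_eq_cons_of_ne hu (tpath hT r u).reverse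
  refine ⟨w, h.symm, ?_⟩
  have : w ∈ (tpath hT r u).reverse.support := by
    rw [hq]; simp [SimpleGraph.Walk.support_cons]
  rwa [SimpleGraph.Walk.support_reverse, List.mem_reverse] at this

lemma Dt.target_ne_root {hT : T.IsTree} {r v w : V} (h : Dt hT r v w) : w ≠ r := by
  rintro rfl
  exact not_Dt_root hT _ v h

/-- The target is not on the path to the source. -/
lemma Dt.not_mem {hT : T.IsTree} {r v w : V} (h : Dt hT r v w) :
    w ∉ (tpath hT r v).support := by
  intro hmem
  have hP := tpath_isPath hT r w
  rw [h.concat_eq] at hP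
  have := hP.support_nodup
  rw [SimpleGraph.Walk.support_concat, List.nodup_append] at this
  exact this.2.2 w hmem w (List.mem_singleton_self w) rfl



section Join

variable {V : Type*} [Fintype V] [DecidableEq V] {T : SimpleGraph V}

/-- The orientation of `joinGraph T ⊤` determined by a clique permutation `σ`,
a root `r` and a position function `pos`. -/
def DJ (hT : T.IsTree) (m : ℕ) (σ : Equiv.Perm (Fin m)) (r : V) (pos : V → ℕ) :
    (V ⊕ Fin m) → (V ⊕ Fin m) → Prop
  | .inl v, .inl w => Dt hT r v w
  | .inl v, .inr c => pos v ≤ (σ c : ℕ)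
  | .inr c, .inl v => (σ c : ℕ) < pos v
  | .inr c, .inr c' => (σ c : ℕ) < (σ c' : ℕ)

/-- The admissibility condition on the root and position data. -/
def Good (hT : T.IsTree) (m : ℕ) (r : V) (pos : V → ℕ) : Prop :=
  (∀ v, pos v ≤ m) ∧ (∀ v w, Dt hT r v w → pos v ≤ pos w) ∧
    (∀ v w, pos v < m → pos w < m → v ≠ w → T.Adj v w)

lemma pot_lt {M A B x y : ℕ} (hx : x < M) (hAB : A < B) : M * A + x < M * B + y := by
  have h1 : M * (A + 1) ≤ M * B := Nat.mul_le_mul_left M hAB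
  have h2 : M * (A + 1) = M * A + M := by ring
  omega

lemma DJ_mem (hT : T.IsTree) (m : ℕ) (σ : Equiv.Perm (Fin m)) (r : V) (pos : V → ℕ)
    (hg : Good hT m r pos) :
    (joinGraph T (⊤ : SimpleGraph (Fin m))).IsOrientation (DJ hT m σ r pos) ∧
      IsAcyclicRel (DJ hT m σ r pos) ∧
      (joinGraph T (⊤ : SimpleGraph (Fin m))).IsMoralOrient (DJ hT m σ r pos) := by
  obtain ⟨hle, hmono, hclique⟩ := hg
  refine ⟨⟨?_, ?_⟩, ?_, ?_⟩
  · rintro (v | c) (w | c')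
    · simp only [join_adj_ll, DJ]
      exact ⟨fun h => Dt_total hT r h, fun h => h.elim (fun h => h.adj) (fun h => h.adj.symm)⟩
    · simp [DJ]; omega
    · simp [DJ]; omega
    · simp only [join_adj_rr, top_adj, DJ]
      constructor
      · intro h
        have h2 : (σ c : ℕ) ≠ (σ c' : ℕ) :=
          fun he => h (σ.injective (Fin.val_injective he))
        omega
      · intro h
        rintro rfl
        omega
  · rintro (v | c) (w | c')
    · rintro ⟨h1, h2⟩; exact h1.asymm h2
    · simp only [DJ]; omega
    · simp only [DJ]; omega
    · simp only [DJ]; omega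
  · -- acyclic
    set M := Fintype.card V + 1 with hM
    set f : V ⊕ Fin m → ℕ := fun x => match x with
      | .inl v => M * pos v + (tpath hT r v).length
      | .inr c => M * (σ c : ℕ) + Fintype.card V
      with hf
    have hlen : ∀ v : V, (tpath hT r v).length < Fintype.card V :=
      fun v => (tpath_isPath hT r v).length_lt
    have hstep : ∀ x y, DJ hT m σ r pos x y → f x < f y := by
      rintro (v | c) (w | c') h
      · have h1 : pos v ≤ pos w := hmono _ _ h
        have h2 := h.length
        simp only [hf]
        have := Nat.mul_le_mul_left M h1
        omega
      · simp only [DJ] at h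
        simp only [hf]
        have := Nat.mul_le_mul_left M h
        have := hlen v
        omega
      · simp only [DJ] at h
        simp only [hf]
        have := hlen w
        exact pot_lt (by omega) h
      · simp only [DJ] at h
        simp only [hf]
        exact pot_lt (by omega) h
    intro a hcyc
    have : ∀ x y, Relation.TransGen (DJ hT m σ r pos) x y → f x < f y := by
      intro x y h
      induction h with
      | single h => exact hstep _ _ h
      | tail _ h ih => exact ih.trans (hstep _ _ h)
    exact absurd (this a a hcyc) (lt_irrefl _)
  · -- moral
    rintro (v | c) (w | c') (u | c'') h1 h2 hne
    · exact (hne (congrArg Sum.inl (h1.parent_unique h2))).elim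
    · have hcm : (σ c'' : ℕ) < m := (σ c'').isLt
      simp only [DJ] at h1 h2
      simp only [join_adj_ll]
      exact hclique v w (by omega) (by omega) (by simpa using hne)
    · simp
    · simp
    · simp
    · simp
    · simpa using hne
    · simpa using hne

end Join

section Inj

variable {V : Type*} [Fintype V] [DecidableEq V] {T : SimpleGraph V}

lemma DJ_inj (hT : T.IsTree) (m : ℕ) {σ σ' : Equiv.Perm (Fin m)} {r r' : V}
    {pos pos' : V → ℕ} (hg : Good hT m r pos) (hg' : Good hT m r' pos')
    (h : DJ hT m σ r pos = DJ hT m σ' r' pos') : σ = σ' ∧ r = r' ∧ pos = pos' := by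
  have hrel : ∀ x y, DJ hT m σ r pos x y ↔ DJ hT m σ' r' pos' x y :=
    fun x y => iff_of_eq (congrFun (congrFun h x) y)
  have hr : r = r' := by
    by_contra hne
    obtain ⟨v, hv⟩ := exists_parent hT (Ne.symm hne)
    have h2 : Dt hT r' v r' := (hrel (.inl v) (.inl r')).1 hv
    exact not_Dt_root hT r' v h2
  subst hr
  have hσiff : ∀ c c', ((σ c : ℕ) < (σ c' : ℕ)) ↔ ((σ' c : ℕ) < (σ' c' : ℕ)) :=
    fun c c' => hrel (.inr c) (.inr c')
  have hσ : σ = σ' := by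
    have hgm : StrictMono (⇑(σ.symm.trans σ')) := by
      intro j j' hjj
      have h1 : ((σ (σ.symm j)) : ℕ) < ((σ (σ.symm j')) : ℕ) := by
        rw [Equiv.apply_symm_apply, Equiv.apply_symm_apply]; exact hjj
      exact (hσiff (σ.symm j) (σ.symm j')).1 h1
    have hrange : Set.range (⇑(σ.symm.trans σ')) = Set.range (id : Fin m → Fin m) := by
      rw [Set.range_id, Set.range_eq_univ]
      exact (σ.symm.trans σ').surjective
    haveI : WellFoundedLT (Fin m) := Finite.to_wellFoundedLT
    have hid : ⇑(σ.symm.trans σ') = id := hgm.range_inj strictMono_id |>.1 hrange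
    ext c : 1
    have := congrFun hid (σ c)
    simpa [Equiv.trans_apply] using this.symm
  subst hσ
  refine ⟨rfl, rfl, funext fun v => ?_⟩
  have hiff : ∀ c : Fin m, ((σ c : ℕ) < pos v) ↔ ((σ c : ℕ) < pos' v) :=
    fun c => hrel (.inr c) (.inl v)
  rcases lt_trichotomy (pos v) (pos' v) with hlt | heq | hlt
  · have hm : pos v < m := lt_of_lt_of_le hlt (hg'.1 v)
    have h2 := (hiff (σ.symm ⟨pos v, hm⟩)).2
    rw [Equiv.apply_symm_apply] at h2
    exact absurd (h2 hlt) (lt_irrefl _)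
  · exact heq
  · have hm : pos' v < m := lt_of_lt_of_le hlt (hg.1 v)
    have h2 := (hiff (σ.symm ⟨pos' v, hm⟩)).1
    rw [Equiv.apply_symm_apply] at h2
    exact absurd (h2 hlt) (lt_irrefl _)

end Inj

section Surj

variable {V : Type*} [Fintype V] [DecidableEq V] {T : SimpleGraph V}

open Finset

lemma DJ_surj (hT : T.IsTree) (m : ℕ) (D : (V ⊕ Fin m) → (V ⊕ Fin m) → Prop)
    (hor : (joinGraph T (⊤ : SimpleGraph (Fin m))).IsOrientation D)
    (hac : IsAcyclicRel D)
    (hmor : (joinGraph T (⊤ : SimpleGraph (Fin m))).IsMoralOrient D) :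
    ∃ (σ : Equiv.Perm (Fin m)) (r : V) (pos : V → ℕ),
      Good hT m r pos ∧ D = DJ hT m σ r pos := by
  classical
  obtain ⟨hadj, hasym⟩ := hor
  have hirr : ∀ x, ¬ D x x := fun x hx => hasym x x ⟨hx, hx⟩
  have htri : ∀ x y z, D x y → D y z → D z x → False := fun x y z h1 h2 h3 =>
    hac x (Relation.TransGen.tail (Relation.TransGen.tail (Relation.TransGen.single h1) h2) h3)
  have hdd : ∀ c c' : Fin m, c ≠ c' → (D (.inr c) (.inr c') ∨ D (.inr c') (.inr c)) := by
    intro c c' hne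
    exact (hadj _ _).1 (by simpa using hne)
  have htrans : ∀ c c' c'' : Fin m,
      D (.inr c) (.inr c') → D (.inr c') (.inr c'') → D (.inr c) (.inr c'') := by
    intro c c' c'' h1 h2
    have hne : c ≠ c'' := by
      rintro rfl
      exact hac _ (Relation.TransGen.tail (Relation.TransGen.single h1) h2)
    rcases hdd c c'' hne with h | h
    · exact h
    · exact (htri _ _ _ h1 h2 h).elim
  -- the rank function on clique vertices
  set rk : Fin m → ℕ := fun c => #(univ.filter (fun c' => D (.inr c') (.inr c))) with hrk
  have hrk_lt : ∀ c, rk c < m := by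
    intro c
    have hsub : univ.filter (fun c' => D (.inr c') (.inr c)) ⊆ univ.erase c := by
      intro x hx
      simp only [mem_filter] at hx
      refine mem_erase.2 ⟨?_, mem_univ _⟩
      rintro rfl
      exact hirr _ hx.2
    have h2 := card_le_card hsub
    rw [card_erase_of_mem (mem_univ c), card_univ, Fintype.card_fin] at h2
    have hm : 0 < m := c.pos
    simp only [hrk]
    omega
  have hrk_mono : ∀ c c', D (.inr c) (.inr c') → rk c < rk c' := by
    intro c c' hD
    have hsub : insert c (univ.filter (fun x => D (.inr x) (.inr c))) ⊆
        univ.filter (fun x => D (.inr x) (.inr c')) := by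
      intro x hx
      rcases mem_insert.mp hx with rfl | hx
      · simp [hD]
      · simp only [mem_filter] at hx ⊢
        exact ⟨mem_univ _, htrans _ _ _ hx.2 hD⟩
    have hnm : c ∉ univ.filter (fun x => D (.inr x) (.inr c)) := by
      simp [hirr]
    have h1 := card_insert_of_notMem hnm
    have h2 := card_le_card hsub
    simp only [hrk]
    omega
  set σfun : Fin m → Fin m := fun c => ⟨rk c, hrk_lt c⟩ with hσfun
  have hinj : Function.Injective σfun := by
    intro c c' he
    by_contra hne
    have hv : rk c = rk c' := by
      have := congrArg Fin.val he
      simpa [hσfun] using this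
    rcases hdd c c' hne with h | h
    · have := hrk_mono _ _ h; omega
    · have := hrk_mono _ _ h; omega
  set σ : Equiv.Perm (Fin m) := Equiv.ofBijective σfun (Finite.injective_iff_bijective.mp hinj)
    with hσdef
  have hσval : ∀ c, (σ c : ℕ) = rk c := fun c => rfl
  have hσlt : ∀ c c', D (.inr c) (.inr c') ↔ (σ c : ℕ) < (σ c' : ℕ) := by
    intro c c'
    constructor
    · intro h; simpa [hσval] using hrk_mono _ _ h
    · intro h
      rw [hσval, hσval] at h
      have hne : c ≠ c' := by rintro rfl; omega
      rcases hdd c c' hne with hD | hD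
      · exact hD
      · have := hrk_mono _ _ hD; omega
  -- positions
  set posf : V → ℕ := fun v => #(univ.filter (fun c => D (.inr c) (.inl v))) with hposf
  have hpos_le : ∀ v, posf v ≤ m := by
    intro v
    have := card_filter_le (univ : Finset (Fin m)) (fun c => D (.inr c) (.inl v))
    simpa [hposf] using this
  have hDrv : ∀ (c : Fin m) (v : V), D (.inr c) (.inl v) ∨ D (.inl v) (.inr c) := by
    intro c v
    rcases (hadj (.inr c) (.inl v)).1 (by simp) with h | h
    · exact Or.inl h
    · exact Or.inr h
  have hdc : ∀ (v : V) (c c' : Fin m), D (.inr c) (.inl v) → (σ c' : ℕ) < (σ c : ℕ) →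
      D (.inr c') (.inl v) := by
    intro v c c' h1 h2
    rcases hDrv c' v with h | h
    · exact h
    · exact ((htri _ _ _ h ((hσlt c' c).2 h2) h1)).elim
  have hkey : ∀ (v : V) (c : Fin m), D (.inr c) (.inl v) ↔ (σ c : ℕ) < posf v := by
    intro v c
    set F := univ.filter (fun c => D (.inr c) (.inl v)) with hF
    have hcard : #(F.image σ) = #F := card_image_of_injective F σ.injective
    constructor
    · intro h
      have hsub : Iic (σ c) ⊆ F.image σ := by
        intro j hj
        rw [mem_Iic] at hj
        rcases eq_or_lt_of_le hj with rfl | hjlt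
        · exact mem_image_of_mem σ (by rw [hF]; exact mem_filter.2 ⟨mem_univ _, h⟩)
        · refine mem_image.2 ⟨σ.symm j, ?_, Equiv.apply_symm_apply σ j⟩
          rw [hF]
          refine mem_filter.2 ⟨mem_univ _, ?_⟩
          refine hdc v c (σ.symm j) h ?_
          rw [Equiv.apply_symm_apply]
          exact hjlt
      have h2 := card_le_card hsub
      rw [Fin.card_Iic, hcard] at h2
      have hpv : posf v = #F := by simp only [hposf, hF]
      omega
    · intro h
      by_contra hnc
      have hsub : F.image σ ⊆ Iio (σ c) := by
        intro j hj
        rw [mem_Iio]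
        obtain ⟨c'', hc'', rfl⟩ := mem_image.1 hj
        simp only [hF, mem_filter] at hc''
        rcases lt_trichotomy (σ c'' : ℕ) (σ c : ℕ) with hlt | heq | hgt
        · exact hlt
        · exact absurd (σ.injective (Fin.val_injective heq)) (by rintro rfl; exact hnc hc''.2)
        · exact (hnc (hdc v c'' c hc''.2 hgt)).elim
      have h2 := card_le_card hsub
      rw [Fin.card_Iio, hcard] at h2
      have hpv : posf v = #F := by simp only [hposf, hF]
      omega
  have hkey2 : ∀ (v : V) (c : Fin m), D (.inl v) (.inr c) ↔ posf v ≤ (σ c : ℕ) := by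
    intro v c
    rcases hDrv c v with h | h
    · refine iff_of_false (fun h' => hasym _ _ ⟨h', h⟩) ?_
      have := (hkey v c).1 h
      omega
    · refine iff_of_true h ?_
      have : ¬ D (.inr c) (.inl v) := fun h' => hasym _ _ ⟨h, h'⟩
      rw [hkey v c] at this
      omega
  -- the tree part
  have hll : ∀ v w, D (.inl v) (.inl w) → T.Adj v w := by
    intro v w h
    have := (hadj (.inl v) (.inl w)).2 (Or.inl h)
    simpa using this
  have hAdjD : ∀ v w, T.Adj v w → D (.inl v) (.inl w) ∨ D (.inl w) (.inl v) := by
    intro v w h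
    exact (hadj _ _).1 (by simpa using h)
  have hindeg : ∀ u v w, D (.inl v) (.inl u) → D (.inl w) (.inl u) → v = w := by
    intro u v w h1 h2
    by_contra hne
    have hadjvw : T.Adj v w := by
      simpa using hmor _ _ _ h1 h2 (fun h => hne (Sum.inl.inj h))
    exact tree_no_triangle hT hadjvw (hll _ _ h2) (hll _ _ h1)
  set Dl : V → V → Prop := fun a b => D (.inl a) (.inl b) with hDl
  have hDlacyc : ∀ v, ¬ Relation.TransGen Dl v v := by
    intro v hv
    exact hac (.inl v) (Relation.TransGen.lift Sum.inl (fun a b h => h) _ _ hv)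
  set g : V → ℕ := fun v => #(univ.filter (fun w => Relation.TransGen Dl w v)) with hg
  have : Nonempty V := hT.isConnected.nonempty
  obtain ⟨r, -, hrmin⟩ := exists_min_image univ g univ_nonempty
  have hroot : ∀ v, ¬ D (.inl v) (.inl r) := by
    intro v hv
    have hsub : insert v (univ.filter (fun w => Relation.TransGen Dl w v)) ⊆
        univ.filter (fun w => Relation.TransGen Dl w r) := by
      intro x hx
      rcases mem_insert.mp hx with rfl | hx
      · exact mem_filter.2 ⟨mem_univ _, Relation.TransGen.single hv⟩
      · exact mem_filter.2 ⟨mem_univ _, Relation.TransGen.tail (mem_filter.1 hx).2 hv⟩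
    have hvnot : v ∉ univ.filter (fun w => Relation.TransGen Dl w v) := by
      simp only [mem_filter, mem_univ, true_and]
      exact hDlacyc v
    have h1 := card_insert_of_notMem hvnot
    have h2 := card_le_card hsub
    have h3 := hrmin v (mem_univ v)
    simp only [hg] at h3
    omega
  have hparent : ∀ u v, Dt hT r v u → D (.inl v) (.inl u) := by
    have H : ∀ n u v, (tpath hT r u).length = n → Dt hT r v u → D (.inl v) (.inl u) := by
      intro n
      induction n using Nat.strong_induction_on with
      | _ n ih =>
        intro u v hlen hDt
        rcases hAdjD v u hDt.adj with h | h
        · exact h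
        · exfalso
          by_cases hvr : v = r
          · subst hvr
            exact hroot u h
          · obtain ⟨w, hw⟩ := exists_parent hT hvr
            have hlv := hDt.length
            have hDw : D (.inl w) (.inl v) :=
              ih (tpath hT r v).length (by omega) v w rfl hw
            have huw : u = w := hindeg v u w h hDw
            exact hDt.not_mem (huw ▸ hw.2)
    exact fun u v h => H _ u v rfl h
  have hllD : ∀ v w, D (.inl v) (.inl w) ↔ Dt hT r v w := by
    intro v w
    constructor
    · intro h
      rcases Dt_total hT r (hll _ _ h) with h' | h'
      · exact h'
      · exact absurd ⟨h, hparent _ _ h'⟩ (hasym _ _)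
    · exact fun h => hparent w v h
  -- goodness
  have hgood : Good hT m r posf := by
    refine ⟨hpos_le, ?_, ?_⟩
    · intro v w hDt
      by_contra hcon
      push_neg at hcon
      have hm : posf w < m := lt_of_lt_of_le hcon (hpos_le v)
      set c := σ.symm ⟨posf w, hm⟩ with hc
      have hcval : (σ c : ℕ) = posf w := by rw [hc, Equiv.apply_symm_apply]
      have h1 : D (.inr c) (.inl v) := (hkey v c).2 (by omega)
      have h2 : D (.inl w) (.inr c) := (hkey2 w c).2 (by omega)
      exact htri _ _ _ (hparent w v hDt) h2 h1
    · intro v w hv hw hne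
      have hm : 0 < m := by omega
      set c := σ.symm ⟨m - 1, by omega⟩ with hc
      have hcval : (σ c : ℕ) = m - 1 := by rw [hc, Equiv.apply_symm_apply]
      have h1 : D (.inl v) (.inr c) := (hkey2 v c).2 (by omega)
      have h2 : D (.inl w) (.inr c) := (hkey2 w c).2 (by omega)
      have := hmor _ _ _ h1 h2 (fun h => hne (Sum.inl.inj h))
      simpa using this
  refine ⟨σ, r, posf, hgood, ?_⟩
  funext x y
  rcases x with v | c <;> rcases y with w | c'
  · exact propext (hllD v w)
  · exact propext (hkey2 v c')
  · exact propext (hkey w c)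
  · exact propext (hσlt c c')

end Surj

section Count

open Finset

variable {V : Type*} [Fintype V] [DecidableEq V] {T : SimpleGraph V}

/-- Case data for a good root/position pair. -/
abbrev QT (T : SimpleGraph V) (m : ℕ) :=
  V ⊕ (V × Fin m) ⊕ (T.Dart × {q : Fin m × Fin m // q.1 ≤ q.2})

def qroot {m : ℕ} : QT T m → V
  | .inl r => r
  | .inr (.inl (r, _)) => r
  | .inr (.inr (d, _)) => d.fst

def qpos {m : ℕ} : QT T m → V → ℕ
  | .inl _ => fun _ => m
  | .inr (.inl (r, k)) => fun v => if v = r then (k : ℕ) else m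
  | .inr (.inr (d, q)) => fun v =>
      if v = d.fst then (q.1.1 : ℕ) else if v = d.snd then (q.1.2 : ℕ) else m

lemma qgood (hT : T.IsTree) {m : ℕ} (q : QT T m) : Good hT m (qroot q) (qpos q) := by
  rcases q with r | ⟨r, k⟩ | ⟨d, ⟨⟨j, k⟩, hjk⟩⟩
  · exact ⟨fun _ => le_rfl, fun _ _ _ => le_rfl, fun v w hv => absurd hv (lt_irrefl m)⟩
  · refine ⟨?_, ?_, ?_⟩
    · intro v
      have := k.isLt
      simp only [qpos]
      split <;> omega
    · intro v w hDt
      by_cases hw : w = r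
      · exact absurd hDt (hw ▸ not_Dt_root hT _ v)
      · have := k.isLt
        simp only [qpos, if_neg hw]
        split <;> omega
    · intro v w hv hw hne
      simp only [qpos] at hv hw
      by_cases h1 : v = r
      · by_cases h2 : w = r
        · exact absurd (h1.trans h2.symm) hne
        · rw [if_neg h2] at hw; omega
      · rw [if_neg h1] at hv; omega
  · have hjk' : (j : ℕ) ≤ (k : ℕ) := hjk
    have hfs : d.fst ≠ d.snd := d.fst_ne_snd
    refine ⟨?_, ?_, ?_⟩
    · intro v
      have := j.isLt
      have := k.isLt
      simp only [qpos]
      split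
      · omega
      · split <;> omega
    · intro v w hDt
      by_cases hw : w = d.fst
      · exact absurd hDt (hw ▸ not_Dt_root hT _ v)
      · by_cases hw2 : w = d.snd
        · subst hw2
          simp only [qroot] at hDt
          have hv : v = d.fst := by
            have hmem := hDt.2
            rw [tpath_adj hT d.adj] at hmem
            simp only [SimpleGraph.Walk.support_cons, SimpleGraph.Walk.support_nil,
              List.mem_cons, List.mem_singleton] at hmem
            rcases hmem with h | h
            · exact h
            · rcases h with h | h
              · exact absurd (h ▸ hDt.adj) (T.irrefl)
              · exact absurd h (by simp)
          subst hv
          simp only [qpos, if_pos rfl, if_neg hw, if_pos rfl]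
          exact hjk'
        · have := j.isLt
          have := k.isLt
          simp only [qpos, if_neg hw, if_neg hw2]
          split
          · omega
          · split <;> omega
    · intro v w hv hw hne
      simp only [qpos] at hv hw
      have hvd : v = d.fst ∨ v = d.snd := by
        by_contra hc
        push_neg at hc
        rw [if_neg hc.1, if_neg hc.2] at hv
        omega
      have hwd : w = d.fst ∨ w = d.snd := by
        by_contra hc
        push_neg at hc
        rw [if_neg hc.1, if_neg hc.2] at hw
        omega
      rcases hvd with rfl | rfl <;> rcases hwd with rfl | rfl
      · exact absurd rfl hne
      · exact d.adj
      · exact d.adj.symm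
      · exact absurd rfl hne

lemma qpos_const {m : ℕ} (r v : V) : qpos (T := T) (m := m) (.inl r) v = m := rfl

lemma qpos_single {m : ℕ} (r : V) (k : Fin m) (v : V) :
    qpos (T := T) (.inr (.inl (r, k))) v = if v = r then (k : ℕ) else m := rfl

lemma qpos_edge {m : ℕ} (d : T.Dart) (q : {q : Fin m × Fin m // q.1 ≤ q.2}) (v : V) :
    qpos (T := T) (.inr (.inr (d, q))) v =
      if v = d.fst then (q.1.1 : ℕ) else if v = d.snd then (q.1.2 : ℕ) else m := rfl

lemma qinj {m : ℕ} (q q' : QT T m) (h1 : qroot q = qroot q') (h2 : qpos q = qpos q') :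
    q = q' := by
  rcases q with r | ⟨r, k⟩ | ⟨d, ⟨⟨j, k⟩, hjk⟩⟩ <;>
    rcases q' with r' | ⟨r', k'⟩ | ⟨d', ⟨⟨j', k'⟩, hjk'⟩⟩
  · simp only [qroot] at h1; rw [h1]
  · have h := congrFun h2 r'
    rw [qpos_const, qpos_single, if_pos rfl] at h
    have := k'.isLt
    omega
  · have h := congrFun h2 d'.snd
    rw [qpos_const, qpos_edge, if_neg d'.snd_ne_fst, if_pos rfl] at h
    have := k'.isLt
    omega
  · have h := congrFun h2 r
    rw [qpos_const, qpos_single, if_pos rfl] at h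
    have := k.isLt
    omega
  · simp only [qroot] at h1
    subst h1
    have h := congrFun h2 r
    rw [qpos_single, qpos_single, if_pos rfl, if_pos rfl] at h
    rw [Fin.val_injective h]
  · simp only [qroot] at h1
    have h := congrFun h2 d'.snd
    have hne : d'.snd ≠ r := by rw [h1]; exact d'.snd_ne_fst
    rw [qpos_single, qpos_edge, if_neg hne, if_neg d'.snd_ne_fst, if_pos rfl] at h
    have := k'.isLt
    omega
  · have h := congrFun h2 d.snd
    rw [qpos_edge, qpos_const, if_neg d.snd_ne_fst, if_pos rfl] at h
    have := k.isLt
    omega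
  · simp only [qroot] at h1
    have h := congrFun h2 d.snd
    have hne : d.snd ≠ r' := by rw [← h1]; exact d.snd_ne_fst
    rw [qpos_edge, qpos_single, if_neg d.snd_ne_fst, if_pos rfl, if_neg hne] at h
    have := k.isLt
    omega
  · simp only [qroot] at h1
    have hsnd : d.snd = d'.snd := by
      by_contra hne
      have h := congrFun h2 d.snd
      have hne2 : d.snd ≠ d'.fst := by rw [← h1]; exact d.snd_ne_fst
      rw [qpos_edge, qpos_edge, if_neg d.snd_ne_fst, if_pos rfl, if_neg hne2,
        if_neg hne] at h
      have := k.isLt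
      omega
    have hd : d = d' := SimpleGraph.Dart.ext _ _ (Prod.ext h1 hsnd)
    subst hd
    have hj : j = j' := by
      have h := congrFun h2 d.fst
      rw [qpos_edge, qpos_edge, if_pos rfl, if_pos rfl] at h
      exact Fin.val_injective h
    have hk : k = k' := by
      have h := congrFun h2 d.snd
      rw [qpos_edge, qpos_edge, if_neg d.snd_ne_fst, if_pos rfl,
        if_neg d.snd_ne_fst, if_pos rfl] at h
      exact Fin.val_injective h
    subst hj; subst hk; rfl

lemma pos_root_le (hT : T.IsTree) {m : ℕ} {r : V} {pos : V → ℕ}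
    (hg : Good hT m r pos) (u : V) : pos r ≤ pos u := by
  have H : ∀ n u, (tpath hT r u).length = n → pos r ≤ pos u := by
    intro n
    induction n using Nat.strong_induction_on with
    | _ n ih =>
      intro u hlen
      by_cases hur : u = r
      · subst hur; exact le_rfl
      · obtain ⟨v, hv⟩ := exists_parent hT hur
        have hlv := hv.length
        have h1 : pos r ≤ pos v := ih (tpath hT r v).length (by omega) v rfl
        exact h1.trans (hg.2.1 v u hv)
  exact H _ u rfl

lemma qsurj (hT : T.IsTree) {m : ℕ} (r : V) (pos : V → ℕ) (hg : Good hT m r pos) :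
    ∃ q : QT T m, qroot q = r ∧ qpos q = pos := by
  classical
  set S : Finset V := univ.filter (fun v => pos v < m) with hS
  have hmemS : ∀ v, v ∈ S ↔ pos v < m := by
    intro v; simp [hS]
  have hSadj : ∀ v w, v ∈ S → w ∈ S → v ≠ w → T.Adj v w := by
    intro v w hv hw hne
    exact hg.2.2 v w ((hmemS v).1 hv) ((hmemS w).1 hw) hne
  have hcard : #S ≤ 2 := by
    by_contra hc
    push_neg at hc
    obtain ⟨a, b, c, ha, hb, hc', hab, hac, hbc⟩ := Finset.two_lt_card_iff.1 hc
    exact tree_no_triangle hT (hSadj a b ha hb hab) (hSadj b c hb hc' hbc)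
      (hSadj a c ha hc' hac)
  have hrS : S.Nonempty → r ∈ S := by
    rintro ⟨a, ha⟩
    rw [hmemS] at ha ⊢
    exact lt_of_le_of_lt (pos_root_le hT hg a) ha
  -- the key step when S = {r, b}
  have hedge : ∀ b, b ∈ S → r ∈ S → b ≠ r → S = {r, b} →
      ∃ q : QT T m, qroot q = r ∧ qpos q = pos := by
    intro b hbS hrS' hbr hSeq
    obtain ⟨v, hv⟩ := exists_parent hT hbr
    have hvS : v ∈ S := by
      rw [hmemS]
      exact lt_of_le_of_lt (hg.2.1 v b hv) ((hmemS b).1 hbS)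
    have hvr : v = r := by
      rw [hSeq] at hvS
      simp only [Finset.mem_insert, Finset.mem_singleton] at hvS
      rcases hvS with h | h
      · exact h
      · exact absurd (h ▸ hv.adj) (T.irrefl)
    subst hvr
    have hposb : pos b < m := (hmemS b).1 hbS
    have hposr : pos v < m := (hmemS v).1 hrS'
    have hjk : pos v ≤ pos b := hg.2.1 v b hv
    refine ⟨.inr (.inr (⟨(v, b), hv.adj⟩, ⟨(⟨pos v, hposr⟩, ⟨pos b, hposb⟩), hjk⟩)), rfl, ?_⟩
    funext u
    rw [qpos_edge]
    by_cases h1 : u = v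
    · subst h1; rw [if_pos rfl]
    · by_cases h2 : u = b
      · subst h2
        have hbv : u ≠ v := fun h => hbr h
        rw [if_neg hbv, if_pos rfl]
      · rw [if_neg h1, if_neg h2]
        have : u ∉ S := by
          rw [hSeq]
          simp [h1, h2]
        rw [hmemS] at this
        have := hg.1 u
        omega
  interval_cases hc : #S
  · -- S empty
    have hempty : S = ∅ := Finset.card_eq_zero.1 hc
    refine ⟨.inl r, rfl, ?_⟩
    funext u
    rw [qpos_const]
    have : u ∉ S := by rw [hempty]; exact Finset.notMem_empty u
    rw [hmemS] at this
    have := hg.1 u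
    omega
  · -- S a singleton
    obtain ⟨a, ha⟩ := Finset.card_eq_one.1 hc
    have hrmem : r ∈ S := hrS ⟨a, by simp [ha]⟩
    have hra : r = a := by
      rw [ha] at hrmem
      simpa using hrmem
    subst hra
    have hposr : pos r < m := (hmemS r).1 hrmem
    refine ⟨.inr (.inl (r, ⟨pos r, hposr⟩)), rfl, ?_⟩
    funext u
    rw [qpos_single]
    by_cases h1 : u = r
    · subst h1; rw [if_pos rfl]
    · rw [if_neg h1]
      have : u ∉ S := by rw [ha]; simpa using h1
      rw [hmemS] at this
      have := hg.1 u
      omega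
  · -- S has two elements
    obtain ⟨a, b, hab, hS2⟩ := Finset.card_eq_two.1 hc
    have hrmem : r ∈ S := hrS ⟨a, by simp [hS2]⟩
    have hra : r = a ∨ r = b := by
      rw [hS2] at hrmem
      simpa using hrmem
    rcases hra with rfl | rfl
    · exact hedge b (by simp [hS2]) hrmem (Ne.symm hab) hS2
    · exact hedge a (by simp [hS2]) hrmem hab (by rw [hS2, Finset.pair_comm])

end Count

end TreeAux
open TreeAux Finset
theorem count_tree_join {V : Type*} [Fintype V] (T : SimpleGraph V) (hT : T.IsTree)
    (p m : ℕ) (hp : Fintype.card V = p) (hp2 : 2 ≤ p) :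
    moralAcyclicCount (joinGraph T (⊤ : SimpleGraph (Fin m)))
      = ((p - 1) * m ^ 2 + (2 * p - 1) * m + p) * Nat.factorial m := by
  classical
  set F : Equiv.Perm (Fin m) × QT T m → ((V ⊕ Fin m) → (V ⊕ Fin m) → Prop) :=
    fun x => DJ hT m x.1 (qroot x.2) (qpos x.2) with hF
  have hSet : {D : (V ⊕ Fin m) → (V ⊕ Fin m) → Prop |
      (joinGraph T (⊤ : SimpleGraph (Fin m))).IsOrientation D ∧ IsAcyclicRel D ∧
        (joinGraph T (⊤ : SimpleGraph (Fin m))).IsMoralOrient D} = Set.range F := by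
    ext D
    simp only [Set.mem_setOf_eq, Set.mem_range]
    constructor
    · rintro ⟨h1, h2, h3⟩
      obtain ⟨σ, r, pos, hgood, hEq⟩ := DJ_surj hT m D h1 h2 h3
      obtain ⟨q, hq1, hq2⟩ := qsurj hT r pos hgood
      refine ⟨(σ, q), ?_⟩
      rw [hF]
      simp only
      rw [hq1, hq2]
      exact hEq.symm
    · rintro ⟨⟨σ, q⟩, rfl⟩
      exact DJ_mem hT m σ (qroot q) (qpos q) (qgood hT q)
  have hFinj : Function.Injective F := by
    rintro ⟨σ, q⟩ ⟨σ', q'⟩ hEq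
    obtain ⟨h1, h2, h3⟩ := DJ_inj hT m (qgood hT q) (qgood hT q') hEq
    exact Prod.ext h1 (qinj q q' h2 h3)
  rw [moralAcyclicCount, hSet, ← Nat.card_coe_set_eq,
    Nat.card_range_of_injective hFinj, Nat.card_eq_fintype_card, Fintype.card_prod,
    Fintype.card_perm, Fintype.card_fin]
  -- count the case data
  have hE : #T.edgeFinset + 1 = p := by rw [← hp]; exact hT.card_edgeFinset
  have hDart : Fintype.card T.Dart = 2 * #T.edgeFinset :=
    T.dart_card_eq_twice_card_edges
  have hpair : Fintype.card {q : Fin m × Fin m // q.1 ≤ q.2} = (m + 1).choose 2 := by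
    rw [← Fintype.card_congr (Sym2.sortEquiv (α := Fin m)), Sym2.card, Fintype.card_fin]
  have hdvd : 2 ∣ (m + 1) * m := by
    rw [mul_comm]; exact (Nat.even_mul_succ_self m).two_dvd
  have hchoose : 2 * ((m + 1).choose 2) = m * (m + 1) := by
    rw [Nat.choose_two_right]
    simp only [Nat.add_sub_cancel]
    rw [Nat.mul_div_cancel' hdvd]
    ring
  have hcardQ : Fintype.card (QT T m) =
      p + (p * m + 2 * #T.edgeFinset * ((m + 1).choose 2)) := by
    simp [QT, Fintype.card_sum, Fintype.card_prod, Fintype.card_fin, hDart, hpair, hp]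
  rw [hcardQ]
  set E := #T.edgeFinset with hEdef
  set C := (m + 1).choose 2 with hC
  rw [← hE, Nat.add_sub_cancel]
  have h21 : 2 * (E + 1) - 1 = 2 * E + 1 := by omega
  rw [h21]
  have h2EC : 2 * E * C = E * (m * (m + 1)) := by
    rw [← hchoose]; ring
  rw [h2EC]
  ring
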